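/- Let ψ₁,…,ψ_m be unit vectors spanning ℂ^d, with priors p_k > 0, Σ p_k = 1, and let (M_k) be an optimal POVM on ℂ^d, i.e. one maximizing Σ_k p_k ⟨ψ_k, N_k ψ_k⟩ over all POVMs (N_k). Define the weights W_k := p_k² ⟨ψ_k, M_k ψ_k⟩. Then S := Σ_ℓ W_ℓ |ψ_ℓ⟩⟨ψ_ℓ| is positive definite on ℂ^d, and M_k = S^{-1/2} W_k |ψ_k⟩⟨ψ_k| S^{-1/2} for every k; in particular every optimal POVM is a Belavkin weighted square-root measurement (and each M_k has rank at most 1). -/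

import Mathlib

open Matrix Filter
open scoped ComplexOrder

noncomputable section

/-- The rank-one projector `|ψ⟩⟨ψ|` as a matrix. -/
def proj {d : ℕ} (ψ : Fin d → ℂ) : Matrix (Fin d) (Fin d) ℂ := vecMulVec ψ (star ψ)

/-- The (real) expectation value `⟨ψ, M ψ⟩`. -/
def expVal {d : ℕ} (M : Matrix (Fin d) (Fin d) ℂ) (ψ : Fin d → ℂ) : ℝ :=
  (star ψ ⬝ᵥ M *ᵥ ψ).re

/-- A POVM: a finite family of PSD matrices summing to the identity. -/
def IsPOVM {d m : ℕ} (M : Fin m → Matrix (Fin d) (Fin d) ℂ) : Prop :=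
  (∀ k, (M k).PosSemidef) ∧ ∑ k, M k = 1

/-- The square root of a positive semidefinite matrix, as defined in the older Mathlib
(`Matrix.PosSemidef.sqrt`, since removed): `U * diagonal (√ eigenvalues) * U⋆`. -/
def Matrix.PosSemidef.sqrt {n : Type*} [Fintype n] [DecidableEq n] {𝕜 : Type*} [RCLike 𝕜]
    {A : Matrix n n 𝕜} (hA : A.PosSemidef) : Matrix n n 𝕜 :=
  hA.1.eigenvectorUnitary.1 * diagonal ((↑) ∘ (√·) ∘ hA.1.eigenvalues) *
  (star hA.1.eigenvectorUnitary : Matrix n n 𝕜)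


namespace BelAux

variable {d : ℕ}

open scoped MatrixOrder in
lemma psd_eq_conjT_mul {A : Matrix (Fin d) (Fin d) ℂ} (hA : A.PosSemidef) :
    ∃ C : Matrix (Fin d) (Fin d) ℂ, A = Cᴴ * C := by
  refine ⟨CFC.sqrt A, ?_⟩
  rw [(CFC.sqrt_nonneg A).posSemidef.1.eq, CFC.sqrt_mul_sqrt_self A hA.nonneg]

open scoped MatrixOrder in
lemma sqrt_eq_of_mul_self {A B : Matrix (Fin d) (Fin d) ℂ} (hA : A.PosSemidef)
    (hB : B.PosSemidef) (h : B * B = A) : hA.sqrt = B := by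
  have e : hA.sqrt = CFC.sqrt A := by
    rw [CFC.sqrt_eq_real_sqrt A hA.nonneg, cfcₙ_eq_cfc, hA.1.cfc_eq]
    simp [IsHermitian.cfc, Unitary.conjStarAlgAut_apply, Matrix.PosSemidef.sqrt]
  rw [e, CFC.sqrt_eq_iff A B hA.nonneg hB.nonneg, h]

lemma star_dot (w x : Fin d → ℂ) : star (star w ⬝ᵥ x) = star x ⬝ᵥ w := by
  simp [dotProduct, Finset.sum_comm, star_sum, mul_comm]

lemma proj_mulVec (w x : Fin d → ℂ) : proj w *ᵥ x = (star w ⬝ᵥ x) • w := by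
  ext i
  simp only [proj, mulVec, vecMulVec_apply, dotProduct, Pi.smul_apply, smul_eq_mul,
    Finset.sum_mul]
  exact Finset.sum_congr rfl fun j _ => by ring

lemma proj_herm (w : Fin d → ℂ) : (proj w).IsHermitian := by
  ext i j
  simp [proj, vecMulVec, conjTranspose_apply, mul_comm]

lemma proj_posSemidef (w : Fin d → ℂ) : (proj w).PosSemidef := by
  refine PosSemidef.of_dotProduct_mulVec_nonneg (proj_herm w) fun x => ?_
  rw [proj_mulVec, dotProduct_smul, smul_eq_mul, ← star_dot w x, mul_comm]
  exact star_mul_self_nonneg _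

lemma proj_mul_mulVec (w : Fin d → ℂ) (B : Matrix (Fin d) (Fin d) ℂ) (x : Fin d → ℂ) :
    (proj w * B) *ᵥ x = (star w ⬝ᵥ B *ᵥ x) • w := by
  rw [← mulVec_mulVec, proj_mulVec]

lemma mul_proj_mulVec (B : Matrix (Fin d) (Fin d) ℂ) (w x : Fin d → ℂ) :
    (B * proj w) *ᵥ x = (star w ⬝ᵥ x) • (B *ᵥ w) := by
  rw [← mulVec_mulVec, proj_mulVec, mulVec_smul]

lemma proj_mul_mul_proj (w : Fin d → ℂ) (B : Matrix (Fin d) (Fin d) ℂ) :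
    proj w * B * proj w = (star w ⬝ᵥ B *ᵥ w) • proj w := by
  ext i j
  simp only [proj, mul_apply, vecMulVec_apply, Matrix.smul_apply, smul_eq_mul, dotProduct, mulVec,
    Finset.sum_mul, Finset.mul_sum]
  rw [Finset.sum_comm]
  exact Finset.sum_congr rfl fun a _ => Finset.sum_congr rfl fun b _ => by ring

lemma trace_proj_mul (w : Fin d → ℂ) (B : Matrix (Fin d) (Fin d) ℂ) :
    (proj w * B).trace = star w ⬝ᵥ B *ᵥ w := by
  simp only [trace, diag, mul_apply, proj, vecMulVec_apply, dotProduct, mulVec, Finset.mul_sum]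
  rw [Finset.sum_comm]
  exact Finset.sum_congr rfl fun a _ => Finset.sum_congr rfl fun b _ => by ring

lemma herm_form_real {X : Matrix (Fin d) (Fin d) ℂ} (hX : X.IsHermitian) (x : Fin d → ℂ) :
    star x ⬝ᵥ X *ᵥ x = ((star x ⬝ᵥ X *ᵥ x).re : ℂ) := by
  have h : star (star x ⬝ᵥ X *ᵥ x) = star x ⬝ᵥ X *ᵥ x := by
    rw [star_dot, star_mulVec, hX.eq, ← dotProduct_mulVec]
  exact ((Complex.conj_eq_iff_re).mp h).symm

lemma conj_form (X : Matrix (Fin d) (Fin d) ℂ) (x : Fin d → ℂ) :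
    star x ⬝ᵥ Xᴴ *ᵥ x = star (star x ⬝ᵥ X *ᵥ x) := by
  rw [star_dot, star_mulVec, ← dotProduct_mulVec]

lemma trace_conjT_mul_self_nonneg (Y : Matrix (Fin d) (Fin d) ℂ) : 0 ≤ (Yᴴ * Y).trace := by
  simp only [trace, diag, mul_apply, conjTranspose_apply]
  exact Finset.sum_nonneg fun j _ => Finset.sum_nonneg fun i _ => star_mul_self_nonneg _

lemma eq_zero_of_trace_conjT_mul_self (Y : Matrix (Fin d) (Fin d) ℂ)
    (h : (Yᴴ * Y).trace = 0) : Y = 0 := by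
  simp only [trace, diag, mul_apply, conjTranspose_apply] at h
  have h2 := (Finset.sum_eq_zero_iff_of_nonneg (fun j _ =>
    Finset.sum_nonneg fun i _ => star_mul_self_nonneg (Y i j))).mp h
  ext i j
  have h3 := (Finset.sum_eq_zero_iff_of_nonneg (fun i _ =>
    star_mul_self_nonneg (Y i j))).mp (h2 j (Finset.mem_univ j)) i (Finset.mem_univ i)
  have := mul_eq_zero.mp h3
  simp only [star_eq_zero] at this
  exact this.elim id id

lemma trace_mul_nonneg {A B : Matrix (Fin d) (Fin d) ℂ}
    (hA : A.PosSemidef) (hB : B.PosSemidef) : 0 ≤ (A * B).trace := by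
  obtain ⟨C, rfl⟩ := psd_eq_conjT_mul hA
  obtain ⟨D, rfl⟩ := psd_eq_conjT_mul hB
  have h1 : Cᴴ * C * (Dᴴ * D) = Cᴴ * (C * Dᴴ * D) := by simp only [mul_assoc]
  have h2 : C * Dᴴ * D * Cᴴ = (C * Dᴴ) * (C * Dᴴ)ᴴ := by
    simp only [conjTranspose_mul, conjTranspose_conjTranspose, mul_assoc]
  rw [h1, trace_mul_comm, h2, trace_mul_comm]
  exact trace_conjT_mul_self_nonneg _

lemma mul_eq_zero_of_trace_eq_zero {A B : Matrix (Fin d) (Fin d) ℂ}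
    (hA : A.PosSemidef) (hB : B.PosSemidef) (h : (A * B).trace = 0) : A * B = 0 := by
  obtain ⟨C, rfl⟩ := psd_eq_conjT_mul hA
  obtain ⟨D, rfl⟩ := psd_eq_conjT_mul hB
  have h1 : Cᴴ * C * (Dᴴ * D) = Cᴴ * (C * Dᴴ * D) := by simp only [mul_assoc]
  have h2 : C * Dᴴ * D * Cᴴ = (C * Dᴴ) * (C * Dᴴ)ᴴ := by
    simp only [conjTranspose_mul, conjTranspose_conjTranspose, mul_assoc]
  rw [h1, trace_mul_comm, h2, trace_mul_comm] at h
  have hZ : C * Dᴴ = 0 := eq_zero_of_trace_conjT_mul_self _ h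
  have h3 : Cᴴ * C * (Dᴴ * D) = Cᴴ * (C * Dᴴ) * D := by simp only [mul_assoc]
  rw [h3, hZ, mul_zero, zero_mul]

lemma smul_posSemidef {A : Matrix (Fin d) (Fin d) ℂ} (hA : A.PosSemidef)
    {r : ℝ} (hr : 0 ≤ r) : ((r : ℂ) • A).PosSemidef := by
  refine PosSemidef.of_dotProduct_mulVec_nonneg ?_ ?_
  · unfold Matrix.IsHermitian
    rw [conjTranspose_smul, hA.1.eq]
    congr 1
    simp
  · intro x
    rw [smul_mulVec, dotProduct_smul, smul_eq_mul]
    exact mul_nonneg (by exact_mod_cast hr) (hA.dotProduct_mulVec_nonneg x)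

lemma real_smul_eq (r : ℝ) (A : Matrix (Fin d) (Fin d) ℂ) : r • A = (r : ℂ) • A := by
  ext i j; simp [Complex.real_smul]

lemma expVal_add (X Y : Matrix (Fin d) (Fin d) ℂ) (x : Fin d → ℂ) :
    expVal (X + Y) x = expVal X x + expVal Y x := by
  simp [expVal, add_mulVec, dotProduct_add]

lemma expVal_sub (X Y : Matrix (Fin d) (Fin d) ℂ) (x : Fin d → ℂ) :
    expVal (X - Y) x = expVal X x - expVal Y x := by
  simp [expVal, sub_mulVec, dotProduct_sub]

lemma expVal_zero (x : Fin d → ℂ) : expVal (0 : Matrix (Fin d) (Fin d) ℂ) x = 0 := by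
  simp [expVal]

lemma expVal_csmul (r : ℝ) (X : Matrix (Fin d) (Fin d) ℂ) (x : Fin d → ℂ) :
    expVal ((r : ℂ) • X) x = r * expVal X x := by
  simp [expVal, smul_mulVec, dotProduct_smul, Complex.mul_re]

lemma expand (P M : Matrix (Fin d) (Fin d) ℂ) (e : ℂ) :
    ((1 : Matrix (Fin d) (Fin d) ℂ) - e • P) * M * ((1 : Matrix (Fin d) (Fin d) ℂ) - e • P)
      = M - e • (P * M) - e • (M * P) + (e * e) • (P * M * P) := by
  simp only [sub_mul, mul_sub, one_mul, mul_one, smul_mul_assoc, mul_smul_comm, smul_smul,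
    smul_sub, smul_add]
  module

lemma sum_mulVec' {ι : Type*} (s : Finset ι) (f : ι → Matrix (Fin d) (Fin d) ℂ) (x : Fin d → ℂ) :
    (∑ i ∈ s, f i) *ᵥ x = ∑ i ∈ s, f i *ᵥ x := by
  ext j
  simp only [mulVec, dotProduct, Finset.sum_apply, Matrix.sum_apply, Finset.sum_mul]
  rw [Finset.sum_comm]

lemma dot_sum' {ι : Type*} (s : Finset ι) (v : Fin d → ℂ) (f : ι → Fin d → ℂ) :
    v ⬝ᵥ (∑ i ∈ s, f i) = ∑ i ∈ s, v ⬝ᵥ f i := by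
  simp only [dotProduct, Finset.sum_apply, Finset.mul_sum]
  rw [Finset.sum_comm]

/-- The main variational consequence of optimality: the Lagrange operator dominates each
`p k • proj (ψ k)` (after symmetrization). -/
lemma keyPSD {d m : ℕ} (ψ : Fin m → Fin d → ℂ) (p : Fin m → ℝ) (hp : ∀ k, 0 ≤ p k)
    (M : Fin m → Matrix (Fin d) (Fin d) ℂ)
    (hMpsd : ∀ k, (M k).PosSemidef) (hMsum : ∑ k, M k = 1)
    (hopt : ∀ N : Fin m → Matrix (Fin d) (Fin d) ℂ, IsPOVM N →
      ∑ k, p k * expVal (N k) (ψ k) ≤ ∑ k, p k * expVal (M k) (ψ k))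
    (k : Fin m) :
    ((∑ j, (p j : ℂ) • (proj (ψ j) * M j)) + (∑ j, (p j : ℂ) • (proj (ψ j) * M j))ᴴ
      - ((2 * p k : ℝ) : ℂ) • proj (ψ k)).PosSemidef := by
  classical
  set L : Matrix (Fin d) (Fin d) ℂ := ∑ j, (p j : ℂ) • (proj (ψ j) * M j) with hLdef
  have hherm : (L + Lᴴ - ((2 * p k : ℝ) : ℂ) • proj (ψ k)).IsHermitian := by
    have h1 : (L + Lᴴ).IsHermitian := by
      unfold Matrix.IsHermitian
      rw [conjTranspose_add, conjTranspose_conjTranspose, add_comm]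
    exact h1.sub (smul_posSemidef (proj_posSemidef (ψ k))
      (by nlinarith [hp k] : (0:ℝ) ≤ 2 * p k)).1
  refine PosSemidef.of_dotProduct_mulVec_nonneg hherm fun φ => ?_
  set P : Matrix (Fin d) (Fin d) ℂ := proj φ with hPdef
  set c' : ℝ := (star φ ⬝ᵥ φ).re with hc'def
  have hc0 : (star φ ⬝ᵥ φ) = (c' : ℂ) :=
    ((Complex.conj_eq_iff_re).mp (star_dot φ φ)).symm
  have hc'0 : 0 ≤ c' := by
    have h := dotProduct_star_self_nonneg φ
    rw [hc0] at h
    exact_mod_cast h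
  set z : Fin m → ℂ := fun j => star (ψ j) ⬝ᵥ (M j *ᵥ φ) with hzdef
  set w : Fin m → ℂ := fun j => star φ ⬝ᵥ ψ j with hwdef
  have hzstar : ∀ j, star (z j) = star φ ⬝ᵥ (M j *ᵥ ψ j) := by
    intro j
    rw [hzdef]
    rw [star_dot, star_mulVec, (hMpsd j).1.eq, ← dotProduct_mulVec]
  have hwstar : ∀ j, star (w j) = star (ψ j) ⬝ᵥ φ := fun j => star_dot φ (ψ j)
  set a : ℝ := ∑ j, p j * (expVal (P * M j) (ψ j) + expVal (M j * P) (ψ j)) with hadef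
  set b : ℝ := ∑ j, p j * expVal (P * M j * P) (ψ j) with hbdef
  set g : ℝ := p k * expVal P (ψ k) with hgdef
  -- the variational inequality for small ε
  have hstep : ∀ ε : ℝ, 0 < ε → ε ≤ 1 → ε * c' ≤ 1 → ε * (b - c' * g) ≤ a - 2 * g := by
    intro ε hε hε1 hεc
    set e : ℂ := ((ε : ℝ) : ℂ) with hedef
    set A : Matrix (Fin d) (Fin d) ℂ := 1 - e • P with hAdef
    set r : ℝ := 2 * ε - ε * ε * c' with hrdef
    have hr0 : 0 ≤ r := by nlinarith
    have hPP : P * (1 : Matrix (Fin d) (Fin d) ℂ) * P = ((c' : ℝ) : ℂ) • P := by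
      rw [hPdef, proj_mul_mul_proj, one_mulVec, hc0]
    have hAA : A * (1 : Matrix (Fin d) (Fin d) ℂ) * A
        = 1 + (e * e * ((c' : ℝ) : ℂ) - 2 * e) • P := by
      rw [hAdef, expand, hPP, mul_one, one_mul, smul_smul]
      module
    have hAh : Aᴴ = A := by
      rw [hAdef, conjTranspose_sub, conjTranspose_smul, conjTranspose_one, hPdef,
        (proj_herm φ).eq]
      have : star e = e := by rw [hedef]; simp
      rw [this]
    set N : Fin m → Matrix (Fin d) (Fin d) ℂ :=
      fun j => A * M j * A + (if j = k then ((r : ℝ) : ℂ) • P else 0) with hNdef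
    have hNpovm : IsPOVM N := by
      constructor
      · intro j
        refine PosSemidef.add ?_ ?_
        · have h := (hMpsd j).mul_mul_conjTranspose_same A
          rwa [hAh] at h
        · by_cases hj : j = k
          · rw [if_pos hj, hPdef]
            exact smul_posSemidef (proj_posSemidef φ) hr0
          · rw [if_neg hj]
            exact PosSemidef.zero
      · show ∑ j, (A * M j * A + _) = 1
        rw [Finset.sum_add_distrib]
        have h1 : ∑ j, A * M j * A = A * (1 : Matrix (Fin d) (Fin d) ℂ) * A := by
          simp only [mul_assoc]
          rw [← Finset.mul_sum, ← Finset.sum_mul, hMsum]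
        have h2 : (∑ j, if j = k then ((r : ℝ) : ℂ) • P else 0) = ((r : ℝ) : ℂ) • P := by
          rw [Finset.sum_ite_eq' Finset.univ k (fun _ => ((r : ℝ) : ℂ) • P),
            if_pos (Finset.mem_univ k)]
        rw [h1, h2, hAA, add_assoc, ← add_smul]
        have h3 : (e * e * ((c' : ℝ) : ℂ) - 2 * e) + ((r : ℝ) : ℂ) = 0 := by
          rw [hrdef, hedef]; push_cast; ring
        rw [h3, zero_smul, add_zero]
    have hineq := hopt N hNpovm
    have hterm : ∀ j, p j * expVal (N j) (ψ j)
        = p j * expVal (M j) (ψ j)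
          - ε * (p j * (expVal (P * M j) (ψ j) + expVal (M j * P) (ψ j)))
          + (ε * ε) * (p j * expVal (P * M j * P) (ψ j))
          + (if j = k then r * (p k * expVal P (ψ k)) else 0) := by
      intro j
      have hNj : N j = A * M j * A + (if j = k then ((r : ℝ) : ℂ) • P else 0) := rfl
      rw [hNj, expVal_add]
      have hexp : expVal (A * M j * A) (ψ j)
          = expVal (M j) (ψ j) - ε * (expVal (P * M j) (ψ j) + expVal (M j * P) (ψ j))
            + (ε * ε) * expVal (P * M j * P) (ψ j) := by
        rw [hAdef, expand]
        have hee : e * e = ((ε * ε : ℝ) : ℂ) := by rw [hedef]; push_cast; ring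
        rw [hee, hedef, expVal_add, expVal_sub, expVal_sub, expVal_csmul, expVal_csmul,
          expVal_csmul]
        ring
      rw [hexp]
      by_cases hj : j = k
      · subst hj
        rw [if_pos rfl, if_pos rfl, expVal_csmul]
        ring
      · rw [if_neg hj, if_neg hj, expVal_zero]
        ring
    rw [Finset.sum_congr rfl (fun j _ => hterm j)] at hineq
    rw [Finset.sum_add_distrib, Finset.sum_add_distrib, Finset.sum_sub_distrib,
      ← Finset.mul_sum, ← Finset.mul_sum,
      Finset.sum_ite_eq' Finset.univ k (fun _ => r * (p k * expVal P (ψ k))),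
      if_pos (Finset.mem_univ k)] at hineq
    have key : - (ε * a) + (ε * ε) * b + r * g ≤ 0 := by
      rw [hadef, hbdef, hgdef]
      linarith [hineq]
    have h2 : ε * 0 ≤ ε * ((a - 2 * g) - ε * (b - c' * g)) := by
      rw [mul_zero, hrdef] at *
      nlinarith [key]
    have h3 := (mul_le_mul_iff_right₀ hε).mp h2
    linarith
  -- pass to the limit ε → 0⁺
  have hag : 2 * g ≤ a := by
    have hc1 : (0:ℝ) < 1 / (c' + 1) := by positivity
    set ε₀ : ℝ := min 1 (1 / (c' + 1)) with hε₀def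
    have hε₀ : 0 < ε₀ := lt_min one_pos hc1
    have hev : ∀ᶠ ε in nhdsWithin (0:ℝ) (Set.Ioi 0), ε * (b - c' * g) ≤ a - 2 * g := by
      filter_upwards [Ioc_mem_nhdsGT_of_mem (Set.mem_Ico.mpr ⟨le_refl (0:ℝ), hε₀⟩)] with ε hε
      have h1 : 0 < ε := hε.1
      have h2 : ε ≤ 1 := le_trans hε.2 (min_le_left _ _)
      have h3 : ε * c' ≤ 1 := by
        have h4 : ε ≤ 1 / (c' + 1) := le_trans hε.2 (min_le_right _ _)
        have h5 : ε * (c' + 1) ≤ 1 := by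
          rw [← le_div_iff₀ (by positivity : (0:ℝ) < c' + 1)] at *
          linarith
        nlinarith
      exact hstep ε h1 h2 h3
    have hlim : Filter.Tendsto (fun ε : ℝ => ε * (b - c' * g))
        (nhdsWithin (0:ℝ) (Set.Ioi 0)) (nhds 0) := by
      have h : Filter.Tendsto (fun ε : ℝ => ε * (b - c' * g)) (nhds (0:ℝ))
          (nhds (0 * (b - c' * g))) := (continuous_mul_right _).tendsto 0
      rw [zero_mul] at h
      exact h.mono_left nhdsWithin_le_nhds
    have := le_of_tendsto hlim hev
    linarith
  -- identify the quadratic form with `a - 2g`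
  have hPMj : ∀ j, expVal (P * M j) (ψ j) = (z j * w j).re := by
    intro j
    show (star (ψ j) ⬝ᵥ (P * M j) *ᵥ ψ j).re = _
    rw [hPdef, proj_mul_mulVec, dotProduct_smul, smul_eq_mul, ← hzstar j, ← hwstar j,
      ← star_mul']
    simp
  have hMPj : ∀ j, expVal (M j * P) (ψ j) = (z j * w j).re := by
    intro j
    show (star (ψ j) ⬝ᵥ (M j * P) *ᵥ ψ j).re = _
    rw [hPdef, mul_proj_mulVec, dotProduct_smul, smul_eq_mul]
    rw [show star (ψ j) ⬝ᵥ (M j *ᵥ φ) = z j from rfl]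
    rw [show star φ ⬝ᵥ ψ j = w j from rfl]
    rw [mul_comm]
  have hLform : star φ ⬝ᵥ L *ᵥ φ = ∑ j, (p j : ℂ) * (z j * w j) := by
    rw [hLdef, sum_mulVec', dot_sum']
    refine Finset.sum_congr rfl fun j _ => ?_
    rw [smul_mulVec, dotProduct_smul, smul_eq_mul, proj_mul_mulVec, dotProduct_smul,
      smul_eq_mul]
  have ha2 : a = 2 * (star φ ⬝ᵥ L *ᵥ φ).re := by
    rw [hLform, Complex.re_sum, hadef, Finset.mul_sum]
    refine Finset.sum_congr rfl fun j _ => ?_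
    rw [hPMj j, hMPj j]
    have : ((p j : ℂ) * (z j * w j)).re = p j * (z j * w j).re := by simp
    rw [this]
    ring
  have hgval : expVal P (ψ k) = (w k * star (w k)).re := by
    show (star (ψ k) ⬝ᵥ P *ᵥ ψ k).re = _
    rw [hPdef, proj_mulVec, dotProduct_smul, smul_eq_mul, ← hwstar k]
  have hk2 : star φ ⬝ᵥ (proj (ψ k) *ᵥ φ) = w k * star (w k) := by
    rw [proj_mulVec, dotProduct_smul, smul_eq_mul, ← hwstar k]
    rw [show star φ ⬝ᵥ ψ k = w k from rfl]
    ring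
  -- final computation
  have hre : (star φ ⬝ᵥ (L + Lᴴ - ((2 * p k : ℝ) : ℂ) • proj (ψ k)) *ᵥ φ).re = a - 2 * g := by
    rw [sub_mulVec, add_mulVec, dotProduct_sub, dotProduct_add, conj_form,
      smul_mulVec, dotProduct_smul, smul_eq_mul, hk2]
    rw [Complex.sub_re, Complex.add_re]
    have h1 : (star (star φ ⬝ᵥ L *ᵥ φ)).re = (star φ ⬝ᵥ L *ᵥ φ).re := by simp
    have h2 : (((2 * p k : ℝ) : ℂ) * (w k * star (w k))).re
        = 2 * p k * (w k * star (w k)).re := by simp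
    rw [h1, h2, hgdef, hgval]
    rw [ha2]
    ring
  have him := herm_form_real hherm φ
  rw [him, hre]
  rw [Complex.zero_le_real]
  linarith

end BelAux

open BelAux

/-- necessity direction of Belavkin's theorem: every optimal POVM for a
spanning pure-state ensemble is the Belavkin weighted square-root measurement with weights
`W k = p k ^ 2 * ⟨ψ k, M k ψ k⟩`, and each `M k` has rank at most 1. -/
theorem belavkin_necessity {d m : ℕ}
    (ψ : Fin m → Fin d → ℂ) (hψ : ∀ k, star (ψ k) ⬝ᵥ ψ k = 1)
    (hspan : Submodule.span ℂ (Set.range ψ) = ⊤)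
    (p : Fin m → ℝ) (hp : ∀ k, 0 < p k) (hp1 : ∑ k, p k = 1)
    (M : Fin m → Matrix (Fin d) (Fin d) ℂ) (hM : IsPOVM M)
    (hopt : ∀ N : Fin m → Matrix (Fin d) (Fin d) ℂ, IsPOVM N →
      ∑ k, p k * expVal (N k) (ψ k) ≤ ∑ k, p k * expVal (M k) (ψ k)) :
    ∃ hS : (∑ ℓ, (p ℓ ^ 2 * expVal (M ℓ) (ψ ℓ)) • proj (ψ ℓ)).PosDef,
      (∀ k, M k = (hS.posSemidef.sqrt)⁻¹ *
          ((p k ^ 2 * expVal (M k) (ψ k)) • proj (ψ k)) * (hS.posSemidef.sqrt)⁻¹)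
      ∧ ∀ k, (M k).rank ≤ 1 := by
  classical
  obtain ⟨hMpsd, hMsum⟩ := hM
  set L : Matrix (Fin d) (Fin d) ℂ := ∑ j, (p j : ℂ) • (proj (ψ j) * M j) with hLdef
  have hkey : ∀ k, (L + Lᴴ - ((2 * p k : ℝ) : ℂ) • proj (ψ k)).PosSemidef :=
    keyPSD ψ p (fun k => (hp k).le) M hMpsd hMsum hopt
  -- trace of L is real and nonnegative
  have htrL0 : (0 : ℂ) ≤ L.trace := by
    rw [hLdef, trace_sum]
    refine Finset.sum_nonneg fun j _ => ?_
    rw [trace_smul, smul_eq_mul]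
    exact mul_nonneg (Complex.zero_le_real.mpr (hp j).le)
      (trace_mul_nonneg (proj_posSemidef (ψ j)) (hMpsd j))
  have htrLreal : star L.trace = L.trace := by
    have h := Complex.nonneg_iff.mp htrL0
    rw [Complex.star_def]
    exact Complex.conj_eq_iff_im.mpr h.2.symm
  -- complementary slackness
  have hDM : ∀ k, (L + Lᴴ - ((2 * p k : ℝ) : ℂ) • proj (ψ k)) * M k = 0 := by
    have h1 : ∑ k, (L + Lᴴ - ((2 * p k : ℝ) : ℂ) • proj (ψ k)) * M k = Lᴴ - L := by
      have h2 : ∀ k, (L + Lᴴ - ((2 * p k : ℝ) : ℂ) • proj (ψ k)) * M k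
          = (L + Lᴴ) * M k - (2 : ℂ) • ((p k : ℂ) • (proj (ψ k) * M k)) := by
        intro k
        rw [sub_mul, smul_mul_assoc, smul_smul]
        norm_num
      rw [Finset.sum_congr rfl fun k _ => h2 k, Finset.sum_sub_distrib, ← Finset.mul_sum,
        hMsum, mul_one, ← Finset.smul_sum, ← hLdef, two_smul]
      abel
    have hsum0 : ∑ k, ((L + Lᴴ - ((2 * p k : ℝ) : ℂ) • proj (ψ k)) * M k).trace = 0 := by
      rw [← trace_sum, h1, trace_sub, trace_conjTranspose, htrLreal, sub_self]
    intro k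
    refine mul_eq_zero_of_trace_eq_zero (hkey k) (hMpsd k) ?_
    exact (Finset.sum_eq_zero_iff_of_nonneg fun j _ =>
      trace_mul_nonneg (hkey j) (hMpsd j)).mp hsum0 k (Finset.mem_univ k)
  have hLM2 : ∀ k, (L + Lᴴ) * M k = ((2 * p k : ℝ) : ℂ) • (proj (ψ k) * M k) := by
    intro k
    have h := hDM k
    rw [sub_mul, sub_eq_zero] at h
    rw [h, smul_mul_assoc]
  -- L is Hermitian
  have hsum2 : L + Lᴴ = (2 : ℂ) • L := by
    calc L + Lᴴ = (L + Lᴴ) * ∑ k, M k := by rw [hMsum, mul_one]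
    _ = ∑ k, (L + Lᴴ) * M k := by rw [Finset.mul_sum]
    _ = ∑ k, ((2 * p k : ℝ) : ℂ) • (proj (ψ k) * M k) :=
        Finset.sum_congr rfl fun k _ => hLM2 k
    _ = (2 : ℂ) • L := by
        rw [hLdef, Finset.smul_sum]
        refine Finset.sum_congr rfl fun k _ => ?_
        rw [smul_smul]
        push_cast
        ring_nf
  have hLh : Lᴴ = L := by
    have h := hsum2
    rw [two_smul] at h
    exact add_left_cancel h
  have hLherm : L.IsHermitian := hLh
  -- the basic relation L * M k = p k • (proj (ψ k) * M k)
  have hLM : ∀ k, L * M k = (p k : ℂ) • (proj (ψ k) * M k) := by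
    intro k
    have h := hLM2 k
    rw [hsum2, smul_mul_assoc] at h
    have h2 : ((2 * p k : ℝ) : ℂ) • (proj (ψ k) * M k)
        = (2 : ℂ) • ((p k : ℂ) • (proj (ψ k) * M k)) := by
      rw [smul_smul]; push_cast; ring_nf
    rw [h2] at h
    exact smul_right_injective _ two_ne_zero h
  have hML : ∀ k, M k * L = (p k : ℂ) • (M k * proj (ψ k)) := by
    intro k
    have h := congrArg conjTranspose (hLM k)
    rw [conjTranspose_mul, hLh, (hMpsd k).1.eq, conjTranspose_smul, conjTranspose_mul,
      (hMpsd k).1.eq, (proj_herm (ψ k)).eq] at h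
    rw [h]
    congr 1
    simp
  -- inner products
  have hPMP : ∀ k, proj (ψ k) * (M k * proj (ψ k))
      = ((expVal (M k) (ψ k) : ℝ) : ℂ) • proj (ψ k) := by
    intro k
    rw [← mul_assoc, proj_mul_mul_proj, herm_form_real (hMpsd k).1]
    rfl
  have hsummand : ∀ k, (proj (ψ k) * M k) * L
      = ((p k * expVal (M k) (ψ k) : ℝ) : ℂ) • proj (ψ k) := by
    intro k
    rw [mul_assoc, hML k, mul_smul_comm, hPMP k, smul_smul]
    congr 1
    push_cast
    ring
  have hLL : L * L = ∑ k, ((p k ^ 2 * expVal (M k) (ψ k) : ℝ) : ℂ) • proj (ψ k) := by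
    rw [hLdef, Finset.sum_mul]
    refine Finset.sum_congr rfl fun k _ => ?_
    rw [smul_mul_assoc, hsummand k, smul_smul]
    congr 1
    push_cast
    ring
  have hSmat : (∑ ℓ, (p ℓ ^ 2 * expVal (M ℓ) (ψ ℓ)) • proj (ψ ℓ)) = L * L := by
    rw [hLL]
    exact Finset.sum_congr rfl fun ℓ _ => real_smul_eq _ _
  -- L is positive definite
  have hLpd : L.PosDef := by
    refine PosDef.of_dotProduct_mulVec_pos hLherm fun x hx => ?_
    obtain ⟨k, hk⟩ : ∃ k, star (ψ k) ⬝ᵥ x ≠ 0 := by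
      by_contra h
      push_neg at h
      have hmem : x ∈ Submodule.span ℂ (Set.range ψ) := hspan ▸ Submodule.mem_top
      have hall : ∀ v ∈ Submodule.span ℂ (Set.range ψ), star x ⬝ᵥ v = 0 := by
        intro v hv
        induction hv using Submodule.span_induction with
        | mem v hv =>
          obtain ⟨k, rfl⟩ := hv
          rw [← star_dot (ψ k) x, h k, star_zero]
        | zero => exact dotProduct_zero _
        | add u v _ _ hu hv => rw [dotProduct_add, hu, hv, add_zero]
        | smul c v _ hv => rw [dotProduct_smul, hv, smul_zero]
      exact hx ((dotProduct_star_self_eq_zero).mp (hall x hmem))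
    have h1 := (hkey k).dotProduct_mulVec_nonneg x
    have hprojform : star x ⬝ᵥ proj (ψ k) *ᵥ x
        = ((Complex.normSq (star (ψ k) ⬝ᵥ x) : ℝ) : ℂ) := by
      rw [proj_mulVec, dotProduct_smul, smul_eq_mul, ← star_dot (ψ k) x,
        Complex.star_def, Complex.mul_conj]
    have hform : star x ⬝ᵥ (L + Lᴴ - ((2 * p k : ℝ) : ℂ) • proj (ψ k)) *ᵥ x
        = ((2 * (star x ⬝ᵥ L *ᵥ x).re
            - 2 * p k * Complex.normSq (star (ψ k) ⬝ᵥ x) : ℝ) : ℂ) := by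
      rw [sub_mulVec, add_mulVec, dotProduct_sub, dotProduct_add, conj_form,
        smul_mulVec, dotProduct_smul, smul_eq_mul, hprojform]
      rw [show star (star x ⬝ᵥ L *ᵥ x) = (starRingEnd ℂ) (star x ⬝ᵥ L *ᵥ x) from rfl,
        Complex.add_conj]
      push_cast
      ring
    rw [hform] at h1
    have hreal : (0:ℝ) ≤ 2 * (star x ⬝ᵥ L *ᵥ x).re
        - 2 * p k * Complex.normSq (star (ψ k) ⬝ᵥ x) := Complex.zero_le_real.mp h1
    rw [herm_form_real hLherm x]
    rw [Complex.zero_lt_real]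
    have hnsq : 0 < Complex.normSq (star (ψ k) ⬝ᵥ x) := Complex.normSq_pos.mpr hk
    nlinarith [hp k]
  -- positive definiteness of S
  have hS : (∑ ℓ, (p ℓ ^ 2 * expVal (M ℓ) (ψ ℓ)) • proj (ψ ℓ)).PosDef := by
    rw [hSmat]
    refine PosDef.of_dotProduct_mulVec_pos ?_ ?_
    · show (L * L)ᴴ = L * L
      rw [conjTranspose_mul, hLh]
    · intro x hx
      have hinj : Function.Injective L.mulVec :=
        mulVec_injective_iff_isUnit.mpr hLpd.isUnit
      have hLx : L *ᵥ x ≠ 0 := fun h0 => hx (hinj (by rw [h0, mulVec_zero]))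
      rw [← mulVec_mulVec, dotProduct_mulVec]
      have hrw : star x ᵥ* L = star (L *ᵥ x) := by rw [star_mulVec, hLh]
      rw [hrw]
      exact dotProduct_star_self_pos_iff.mpr hLx
  -- identification of the square root
  have hdet : IsUnit L.det := (Matrix.isUnit_iff_isUnit_det L).mp hLpd.isUnit
  have hsqrt : hS.posSemidef.sqrt = L := by
    exact sqrt_eq_of_mul_self hS.posSemidef hLpd.posSemidef hSmat.symm
  have hmain : ∀ k, M k = (hS.posSemidef.sqrt)⁻¹ *
      ((p k ^ 2 * expVal (M k) (ψ k)) • proj (ψ k)) * (hS.posSemidef.sqrt)⁻¹ := by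
    intro k
    have hLML : L * M k * L = ((p k ^ 2 * expVal (M k) (ψ k) : ℝ) : ℂ) • proj (ψ k) := by
      rw [hLM k, smul_mul_assoc, hsummand k, smul_smul]
      congr 1
      push_cast
      ring
    rw [hsqrt, real_smul_eq, ← hLML]
    have : L⁻¹ * (L * M k * L) * L⁻¹ = (L⁻¹ * L) * M k * (L * L⁻¹) := by
      simp only [mul_assoc]
    rw [this, Matrix.nonsing_inv_mul _ hdet, Matrix.mul_nonsing_inv _ hdet, one_mul, mul_one]
  refine ⟨hS, hmain, fun k => ?_⟩
  rw [hmain k, real_smul_eq]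
  calc ((hS.posSemidef.sqrt)⁻¹ * (((p k ^ 2 * expVal (M k) (ψ k) : ℝ) : ℂ) • proj (ψ k))
        * (hS.posSemidef.sqrt)⁻¹).rank
      ≤ ((hS.posSemidef.sqrt)⁻¹ * (((p k ^ 2 * expVal (M k) (ψ k) : ℝ) : ℂ) • proj (ψ k))).rank :=
        rank_mul_le_left _ _
    _ ≤ ((((p k ^ 2 * expVal (M k) (ψ k) : ℝ) : ℂ) • proj (ψ k))).rank := rank_mul_le_right _ _
    _ ≤ (proj (ψ k)).rank := by
        rw [show (((p k ^ 2 * expVal (M k) (ψ k) : ℝ) : ℂ) • proj (ψ k))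
            = (((p k ^ 2 * expVal (M k) (ψ k) : ℝ) : ℂ) • (1 : Matrix (Fin d) (Fin d) ℂ))
              * proj (ψ k) from by rw [smul_mul_assoc, one_mul]]
        exact rank_mul_le_right _ _
    _ ≤ 1 := by
        rw [proj, vecMulVec_eq (Fin 1)]
        calc (replicateCol (Fin 1) (ψ k) * replicateRow (Fin 1) (star (ψ k))).rank
            ≤ (replicateCol (Fin 1) (ψ k)).rank := rank_mul_le_left _ _
          _ ≤ Fintype.card (Fin 1) := rank_le_card_width _
          _ = 1 := by simp
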